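/- The joint Gromov–Wasserstein objective does not satisfy the triangle inequality. Concretely, for every p ∈ [1,∞), let 𝐗 be the distribution of mm-spaces with a single cluster consisting of the two-point metric space {0, 1} ⊂ ℝ with the uniform probability measure, let 𝐙 be the distribution of mm-spaces with a single cluster consisting of the two-point metric space {0, 2} ⊂ ℝ with the uniform probability measure, and let 𝐘 be the distribution of mm-spaces with two clusters, each a one-point metric space with its unique probability measure and each with weight 1/2. Then JGW_p(𝐗,𝐘) = 0 and JGW_p(𝐙,𝐘) = 0, but JGW_p(𝐗,𝐙) > 0. -/

import Mathlib

/-- A metric measure space: a compact metric space equipped with a Borel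
probability measure of full support. -/
structure MMSpace where
  carrier : Type
  [met : MetricSpace carrier]
  [cpt : CompactSpace carrier]
  [mble : MeasurableSpace carrier]
  [borel : BorelSpace carrier]
  μ : MeasureTheory.Measure carrier
  [prob : MeasureTheory.IsProbabilityMeasure μ]
  fullSupp : μ.IsOpenPosMeasure

attribute [instance] MMSpace.met MMSpace.cpt MMSpace.mble MMSpace.borel MMSpace.prob

/-- A distribution of mm-spaces: finitely many mm-spaces (clusters) with
strictly positive weights summing to one. -/
structure MMDist where
  k : ℕ
  space : Fin k → MMSpace
  s : Fin k → ℝ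
  s_pos : ∀ i, 0 < s i
  s_sum : ∑ i, s i = 1

/-- An embedding of a distribution of mm-spaces: an mm-space together with
isometric embedding functions whose weighted pushforwards recover the measure,
with pairwise disjoint images covering the space. -/
structure MMEmbedding (D : MMDist) where
  tot : MMSpace
  ψ : ∀ i, (D.space i).carrier → tot.carrier
  isom : ∀ i, Isometry (ψ i)
  pushforward :
    ∑ i, ENNReal.ofReal (D.s i) • MeasureTheory.Measure.map (ψ i) (D.space i).μ = tot.μ
  disj : ∀ i j, i ≠ j → Disjoint (Set.range (ψ i)) (Set.range (ψ j))
  cover : ⋃ i, Set.range (ψ i) = Set.univ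

open MeasureTheory

/-- The set of couplings `M(μX, μY)`: Borel probability measures on the product
with the prescribed marginals. -/
def Couplings {X Y : Type} [MeasurableSpace X] [MeasurableSpace Y]
    (μX : Measure X) (μY : Measure Y) : Set (Measure (X × Y)) :=
  {μ | IsProbabilityMeasure μ ∧ μ.map Prod.fst = μX ∧ μ.map Prod.snd = μY}

/-- The Gromov-Wasserstein objective `GW_{Γ,p}` for a loss `Γ`. -/
noncomputable def GWobj {X Y : Type} [MeasurableSpace X] [MeasurableSpace Y]
    (μX : Measure X) (μY : Measure Y) (Γ : X → Y → X → Y → ℝ) (p : ℝ) : ℝ :=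
  sInf ((fun μ : Measure (X × Y) =>
      (1 / 2) * (∫ w : (X × Y) × (X × Y), Γ w.1.1 w.1.2 w.2.1 w.2.2 ∂(μ.prod μ)) ^ (1 / p))
    '' Couplings μX μY)

open scoped Classical in
/-- The loss `Γ*_p` associated to embeddings of two distributions of mm-spaces. -/
noncomputable def GammaStar {DX DY : MMDist} (EX : MMEmbedding DX) (EY : MMEmbedding DY)
    (p : ℝ) (x : EX.tot.carrier) (y : EY.tot.carrier)
    (x' : EX.tot.carrier) (y' : EY.tot.carrier) : ℝ :=
  if (∃ i, x ∈ Set.range (EX.ψ i) ∧ x' ∈ Set.range (EX.ψ i)) ∧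
      (∃ j, y ∈ Set.range (EY.ψ j) ∧ y' ∈ Set.range (EY.ψ j)) then
    |dist x x' - dist y y'| ^ p
  else 0

/-- The joint Gromov-Wasserstein objective computed with given embeddings. -/
noncomputable def JGWwith {DX DY : MMDist} (EX : MMEmbedding DX) (EY : MMEmbedding DY)
    (p : ℝ) : ℝ :=
  GWobj EX.tot.μ EY.tot.μ (GammaStar EX EY p) p

open scoped ENNReal

/-- The two-point mm-space `{a, b} ⊂ ℝ` with the uniform probability measure. -/
noncomputable def twoPointMM (a b : ℝ) : MMSpace where
  carrier := ({a, b} : Set ℝ)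
  μ := (1 / 2 : ℝ≥0∞) • (Measure.dirac ⟨a, by simp⟩ + Measure.dirac ⟨b, by simp⟩)
  prob := by
    constructor
    simp [Measure.add_apply, ENNReal.inv_two_add_inv_two]
  fullSupp := by
    constructor
    intro U hU hne
    obtain ⟨x, hxU⟩ := hne
    have hm : MeasurableSet U := hU.measurableSet
    have hdx : (Measure.dirac x) U = 1 := by
      rw [Measure.dirac_apply' _ hm]; simp [hxU]
    have hsum : (Measure.dirac (⟨a, by simp⟩ : ({a, b} : Set ℝ))) U +
        (Measure.dirac (⟨b, by simp⟩ : ({a, b} : Set ℝ))) U ≠ 0 := by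
      rcases x.2 with h | h
      · have hx : x = (⟨a, by simp⟩ : ({a, b} : Set ℝ)) := Subtype.ext h
        rw [← hx]
        simp [hdx]
      · have hx : x = (⟨b, by simp⟩ : ({a, b} : Set ℝ)) := Subtype.ext h
        rw [← hx]
        intro hcon
        rw [add_comm] at hcon
        simp [hdx] at hcon
    simp only [Measure.smul_apply, Measure.add_apply, smul_eq_mul]
    exact mul_ne_zero (by simp) hsum

/-- The one-point mm-space `{a} ⊂ ℝ` with its unique probability measure. -/
noncomputable def onePointMM (a : ℝ) : MMSpace where
  carrier := ({a} : Set ℝ)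
  μ := Measure.dirac ⟨a, rfl⟩
  fullSupp := by
    constructor
    intro U hU hne
    obtain ⟨x, hxU⟩ := hne
    have hx : x = (⟨a, rfl⟩ : ({a} : Set ℝ)) := Subtype.ext x.2
    rw [Measure.dirac_apply' _ hU.measurableSet]
    simp [← hx, hxU]

/-- The distribution of mm-spaces `𝐗` with a single cluster `{0, 1} ⊂ ℝ`,
uniform measure, weight `1`. -/
noncomputable def distX : MMDist where
  k := 1
  space := fun _ => twoPointMM 0 1
  s := fun _ => 1
  s_pos := fun _ => one_pos
  s_sum := by simp

/-- The distribution of mm-spaces `𝐙` with a single cluster `{0, 2} ⊂ ℝ`,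
uniform measure, weight `1`. -/
noncomputable def distZ : MMDist where
  k := 1
  space := fun _ => twoPointMM 0 2
  s := fun _ => 1
  s_pos := fun _ => one_pos
  s_sum := by simp

/-- The distribution of mm-spaces `𝐘` with two clusters, each a one-point
metric space with its unique probability measure, each of weight `1/2`. -/
noncomputable def distY : MMDist where
  k := 2
  space := fun _ => onePointMM 0
  s := fun _ => 1 / 2
  s_pos := fun _ => by norm_num
  s_sum := by norm_num [Fin.sum_univ_two]

/-! ### Auxiliary machinery -/

noncomputable def distTwo (a b : ℝ) : MMDist where
  k := 1
  space := fun _ => twoPointMM a b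
  s := fun _ => 1
  s_pos := fun _ => one_pos
  s_sum := by simp

lemma mem_twoPoint_left (a b : ℝ) : a ∈ ({a, b} : Set ℝ) := by simp
lemma mem_twoPoint_right (a b : ℝ) : b ∈ ({a, b} : Set ℝ) := by simp

lemma totMu_two (a b : ℝ) (E : MMEmbedding (distTwo a b)) :
    E.tot.μ = (1/2 : ℝ≥0∞) •
      (Measure.dirac (E.ψ (0 : Fin 1) ⟨a, mem_twoPoint_left a b⟩) +
        Measure.dirac (E.ψ (0 : Fin 1) ⟨b, mem_twoPoint_right a b⟩)) := by
  have hm : Measurable (E.ψ (0 : Fin 1)) := (E.isom (0 : Fin 1)).continuous.measurable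
  rw [← E.pushforward,
    show (∑ i, ENNReal.ofReal ((distTwo a b).s i) •
        Measure.map (E.ψ i) ((distTwo a b).space i).μ)
      = ENNReal.ofReal ((distTwo a b).s (0 : Fin 1)) •
        Measure.map (E.ψ (0 : Fin 1)) ((distTwo a b).space (0 : Fin 1)).μ
      from Fin.sum_univ_one _,
    show (distTwo a b).s (0 : Fin 1) = 1 from rfl,
    show ((distTwo a b).space (0 : Fin 1)).μ
      = ((1/2 : ℝ≥0∞) • (Measure.dirac (⟨a, mem_twoPoint_left a b⟩ : ({a, b} : Set ℝ)) +
          Measure.dirac (⟨b, mem_twoPoint_right a b⟩ : ({a, b} : Set ℝ))))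
      from rfl,
    ENNReal.ofReal_one, one_smul]
  erw [Measure.map_smul, Measure.map_add _ _ hm,
    Measure.map_dirac' hm, Measure.map_dirac' hm]

lemma totMu_Y (E : MMEmbedding distY) :
    E.tot.μ = (1/2 : ℝ≥0∞) •
      (Measure.dirac (E.ψ (0 : Fin 2) ⟨0, rfl⟩) + Measure.dirac (E.ψ (1 : Fin 2) ⟨0, rfl⟩)) := by
  have hm0 : Measurable (E.ψ (0 : Fin 2)) := (E.isom (0 : Fin 2)).continuous.measurable
  have hm1 : Measurable (E.ψ (1 : Fin 2)) := (E.isom (1 : Fin 2)).continuous.measurable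
  rw [← E.pushforward,
    show (∑ i, ENNReal.ofReal (distY.s i) • Measure.map (E.ψ i) (distY.space i).μ)
      = ENNReal.ofReal (distY.s (0 : Fin 2)) •
          Measure.map (E.ψ (0 : Fin 2)) (distY.space (0 : Fin 2)).μ +
        ENNReal.ofReal (distY.s (1 : Fin 2)) •
          Measure.map (E.ψ (1 : Fin 2)) (distY.space (1 : Fin 2)).μ
      from Fin.sum_univ_two _,
    show distY.s (0 : Fin 2) = 1/2 from rfl,
    show distY.s (1 : Fin 2) = 1/2 from rfl,
    show (distY.space (0 : Fin 2)).μ = Measure.dirac (⟨0, rfl⟩ : ({(0:ℝ)} : Set ℝ)) from rfl,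
    show (distY.space (1 : Fin 2)).μ = Measure.dirac (⟨0, rfl⟩ : ({(0:ℝ)} : Set ℝ)) from rfl,
    ENNReal.ofReal_div_of_pos two_pos, ENNReal.ofReal_one, ENNReal.ofReal_ofNat]
  erw [Measure.map_dirac' hm0, Measure.map_dirac' hm1, smul_add]
lemma gammaStar_nonneg {DX DY : MMDist} (EX : MMEmbedding DX) (EY : MMEmbedding DY)
    (p : ℝ) (x : EX.tot.carrier) (y : EY.tot.carrier)
    (x' : EX.tot.carrier) (y' : EY.tot.carrier) :
    0 ≤ GammaStar EX EY p x y x' y' := by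
  unfold GammaStar
  split_ifs
  · positivity
  · exact le_refl 0

lemma gammaStar_diag {DX DY : MMDist} (EX : MMEmbedding DX) (EY : MMEmbedding DY)
    {p : ℝ} (hp : p ≠ 0) (x : EX.tot.carrier) (y : EY.tot.carrier) :
    GammaStar EX EY p x y x y = 0 := by
  unfold GammaStar
  split_ifs
  · simp [Real.zero_rpow hp]
  · rfl

/-- The zero part: `JGW_p(two-point dist, 𝐘) = 0`. -/
lemma jgw_two_Y_eq_zero (a b : ℝ) (p : ℝ) (hp : 1 ≤ p)
    (EX : MMEmbedding (distTwo a b)) (EY : MMEmbedding distY) :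
    JGWwith EX EY p = 0 := by
  have hp0 : p ≠ 0 := by linarith
  set x0 := EX.ψ (0 : Fin 1) ⟨a, mem_twoPoint_left a b⟩ with hx0
  set x1 := EX.ψ (0 : Fin 1) ⟨b, mem_twoPoint_right a b⟩ with hx1
  set y0 := EY.ψ (0 : Fin 2) ⟨0, rfl⟩ with hy0
  set y1 := EY.ψ (1 : Fin 2) ⟨0, rfl⟩ with hy1
  set μ0 : Measure (EX.tot.carrier × EY.tot.carrier) :=
    (1/2 : ℝ≥0∞) • (Measure.dirac (x0, y0) + Measure.dirac (x1, y1)) with hμ0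
  have hprob : IsProbabilityMeasure μ0 := by
    constructor
    rw [hμ0]
    simp only [Measure.smul_apply, Measure.add_apply, measure_univ, smul_eq_mul]
    rw [one_div]
    norm_num
    exact ENNReal.inv_mul_cancel two_ne_zero ENNReal.ofNat_ne_top
  have hfst : μ0.map Prod.fst = EX.tot.μ := by
    rw [hμ0, Measure.map_smul, Measure.map_add _ _ measurable_fst,
      Measure.map_dirac' measurable_fst, Measure.map_dirac' measurable_fst, totMu_two]
  have hsnd : μ0.map Prod.snd = EY.tot.μ := by
    rw [hμ0, Measure.map_smul, Measure.map_add _ _ measurable_snd,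
      Measure.map_dirac' measurable_snd, Measure.map_dirac' measurable_snd, totMu_Y]
  have hcoup : μ0 ∈ Couplings EX.tot.μ EY.tot.μ := ⟨hprob, hfst, hsnd⟩
  -- the two `Y`-points lie in different clusters
  have hyne : ∀ j, y0 ∈ Set.range (EY.ψ j) → y1 ∈ Set.range (EY.ψ j) → False := by
    rintro j ⟨t, ht⟩ ⟨t', ht'⟩
    have htt : t = t' := Subtype.ext (t.2.trans t'.2.symm)
    have hyy : y0 = y1 := by rw [← ht, ← ht', htt]
    have hdisj := EY.disj (0 : Fin 2) (1 : Fin 2) (show (0 : Fin 2) ≠ 1 by decide)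
    exact Set.disjoint_left.mp hdisj ⟨⟨0, rfl⟩, rfl⟩ ⟨⟨0, rfl⟩, hyy.symm⟩
  have hcross01 : ∀ x x', GammaStar EX EY p x y0 x' y1 = 0 := by
    intro x x'
    unfold GammaStar
    rw [if_neg]
    rintro ⟨_, j, hj0, hj1⟩
    exact hyne j hj0 hj1
  have hcross10 : ∀ x x', GammaStar EX EY p x y1 x' y0 = 0 := by
    intro x x'
    unfold GammaStar
    rw [if_neg]
    rintro ⟨_, j, hj1, hj0⟩
    exact hyne j hj0 hj1
  -- the loss vanishes a.e. for the product of the coupling with itself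
  have hT : MeasurableSet ({(x0, y0), (x1, y1)} : Set (EX.tot.carrier × EY.tot.carrier)) :=
    ((Set.finite_singleton _).insert _).measurableSet
  have hTc0 : μ0 ({(x0, y0), (x1, y1)} : Set (EX.tot.carrier × EY.tot.carrier))ᶜ = 0 := by
    rw [hμ0]
    simp only [Measure.smul_apply, Measure.add_apply, smul_eq_mul]
    rw [Measure.dirac_apply' _ hT.compl, Measure.dirac_apply' _ hT.compl]
    simp
  haveI : SFinite μ0 := by infer_instance
  have hae : ∀ᵐ w ∂(μ0.prod μ0),
      GammaStar EX EY p w.1.1 w.1.2 w.2.1 w.2.2 = 0 := by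
    rw [ae_iff]
    set T : Set (EX.tot.carrier × EY.tot.carrier) := {(x0, y0), (x1, y1)} with hTdef
    refine measure_mono_null (?_ : _ ⊆ (Tᶜ ×ˢ Set.univ) ∪ (Set.univ ×ˢ Tᶜ)) ?_
    · intro w hw
      simp only [Set.mem_setOf_eq] at hw
      by_contra hU
      simp only [Set.mem_union, Set.mem_prod, Set.mem_univ, and_true, true_and,
        Set.mem_compl_iff, not_or, not_not] at hU
      obtain ⟨h1, h2⟩ := hU
      rw [hTdef] at h1 h2
      simp only [Set.mem_insert_iff, Set.mem_singleton_iff] at h1 h2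
      rcases h1 with h1 | h1 <;> rcases h2 with h2 | h2 <;>
        rw [show w.1.1 = (w.1).1 from rfl, show w.1.2 = (w.1).2 from rfl,
          show w.2.1 = (w.2).1 from rfl, show w.2.2 = (w.2).2 from rfl, h1, h2] at hw <;>
        first
          | exact hw (gammaStar_diag EX EY hp0 _ _)
          | exact hw (hcross01 _ _)
          | exact hw (hcross10 _ _)
    · apply measure_union_null <;> rw [Measure.prod_prod] <;> simp [hTc0]
  have hI : ∫ w : (EX.tot.carrier × EY.tot.carrier) × (EX.tot.carrier × EY.tot.carrier),
      GammaStar EX EY p w.1.1 w.1.2 w.2.1 w.2.2 ∂(μ0.prod μ0) = 0 :=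
    integral_eq_zero_of_ae hae
  -- conclude
  show sInf _ = 0
  have h0mem : (0:ℝ) ∈ (fun μ : Measure (EX.tot.carrier × EY.tot.carrier) =>
      (1 / 2) * (∫ w : (EX.tot.carrier × EY.tot.carrier) × (EX.tot.carrier × EY.tot.carrier),
        GammaStar EX EY p w.1.1 w.1.2 w.2.1 w.2.2 ∂(μ.prod μ)) ^ (1 / p))
      '' Couplings EX.tot.μ EY.tot.μ := by
    refine ⟨μ0, hcoup, ?_⟩
    simp only [hI, Real.zero_rpow (one_div_ne_zero hp0), mul_zero]
  have hbd : ∀ v ∈ (fun μ : Measure (EX.tot.carrier × EY.tot.carrier) =>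
      (1 / 2) * (∫ w : (EX.tot.carrier × EY.tot.carrier) × (EX.tot.carrier × EY.tot.carrier),
        GammaStar EX EY p w.1.1 w.1.2 w.2.1 w.2.2 ∂(μ.prod μ)) ^ (1 / p))
      '' Couplings EX.tot.μ EY.tot.μ, (0:ℝ) ≤ v := by
    rintro v ⟨ν, hν, rfl⟩
    refine mul_nonneg (by norm_num) (Real.rpow_nonneg ?_ _)
    exact integral_nonneg fun w => gammaStar_nonneg EX EY p _ _ _ _
  exact le_antisymm (csInf_le ⟨0, hbd⟩ h0mem) (le_csInf ⟨0, h0mem⟩ hbd)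
/-- The positivity part: `JGW_p(𝐗, 𝐙) > 0`. -/
lemma jgw_XZ_pos (p : ℝ) (hp : 1 ≤ p)
    (EX : MMEmbedding (distTwo 0 1)) (EZ : MMEmbedding (distTwo 0 2)) :
    0 < JGWwith EX EZ p := by
  have hppos : (0:ℝ) < p := lt_of_lt_of_le one_pos hp
  set X := EX.tot.carrier
  set Z := EZ.tot.carrier
  set x0 := EX.ψ (0 : Fin 1) ⟨0, mem_twoPoint_left 0 1⟩ with hx0def
  set x1 := EX.ψ (0 : Fin 1) ⟨1, mem_twoPoint_right 0 1⟩ with hx1def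
  set z0 := EZ.ψ (0 : Fin 1) ⟨0, mem_twoPoint_left 0 2⟩ with hz0def
  set z1 := EZ.ψ (0 : Fin 1) ⟨2, mem_twoPoint_right 0 2⟩ with hz1def
  have hdx : dist x0 x1 = 1 := by
    erw [hx0def, hx1def, (EX.isom (0 : Fin 1)).dist_eq, Subtype.dist_eq, Real.dist_eq]
    norm_num
  have hdz : dist z0 z1 = 2 := by
    erw [hz0def, hz1def, (EZ.isom (0 : Fin 1)).dist_eq, Subtype.dist_eq, Real.dist_eq]
    norm_num
  have hx01 : x0 ≠ x1 := by
    intro h; rw [h, dist_self] at hdx; norm_num at hdx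
  have hz01 : z0 ≠ z1 := by
    intro h; rw [h, dist_self] at hdz; norm_num at hdz
  -- every point of `X` is `x0` or `x1`
  have hallX : ∀ x : X, x = x0 ∨ x = x1 := by
    intro x
    have hx : x ∈ ⋃ i, Set.range (EX.ψ i) := by rw [EX.cover]; exact Set.mem_univ x
    rcases Set.mem_iUnion.mp hx with ⟨i, hxi⟩
    obtain ⟨t, ht⟩ : ∃ t : ({0, 1} : Set ℝ), EX.ψ (0 : Fin 1) t = x := by
      have hi : i = (0 : Fin 1) := Subsingleton.elim (α := Fin 1) _ _
      subst hi
      exact hxi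
    have ht2 := t.2
    simp only [Set.mem_insert_iff, Set.mem_singleton_iff] at ht2
    rcases ht2 with h | h
    · left; rw [← ht, hx0def]; congr 1; exact Subtype.ext h
    · right; rw [← ht, hx1def]; congr 1; exact Subtype.ext h
  have hallZ : ∀ z : Z, z = z0 ∨ z = z1 := by
    intro z
    have hz : z ∈ ⋃ i, Set.range (EZ.ψ i) := by rw [EZ.cover]; exact Set.mem_univ z
    rcases Set.mem_iUnion.mp hz with ⟨i, hzi⟩
    obtain ⟨t, ht⟩ : ∃ t : ({0, 2} : Set ℝ), EZ.ψ (0 : Fin 1) t = z := by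
      have hi : i = (0 : Fin 1) := Subsingleton.elim (α := Fin 1) _ _
      subst hi
      exact hzi
    have ht2 := t.2
    simp only [Set.mem_insert_iff, Set.mem_singleton_iff] at ht2
    rcases ht2 with h | h
    · left; rw [← ht, hz0def]; congr 1; exact Subtype.ext h
    · right; rw [← ht, hz1def]; congr 1; exact Subtype.ext h
  have hXmem : ∀ x : X, x ∈ Set.range (EX.ψ (0 : Fin 1)) := by
    intro x; rcases hallX x with h | h <;> rw [h] <;> exact ⟨_, rfl⟩
  have hZmem : ∀ z : Z, z ∈ Set.range (EZ.ψ (0 : Fin 1)) := by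
    intro z; rcases hallZ z with h | h <;> rw [h] <;> exact ⟨_, rfl⟩
  have hΓ : ∀ (x : X) (z : Z) (x' : X) (z' : Z),
      GammaStar EX EZ p x z x' z' = |dist x x' - dist z z'| ^ p := by
    intro x z x' z'
    unfold GammaStar
    rw [if_pos ⟨⟨(0 : Fin 1), hXmem x, hXmem x'⟩, ⟨(0 : Fin 1), hZmem z, hZmem z'⟩⟩]
  have hdX : ∀ x x' : X, dist x x' = 0 ∨ dist x x' = 1 := by
    intro x x'
    rcases hallX x with h | h <;> rcases hallX x' with h' | h' <;> rw [h, h']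
    · left; exact dist_self _
    · right; exact hdx
    · right; rw [dist_comm]; exact hdx
    · left; exact dist_self _
  have hdZ : ∀ z z' : Z, dist z z' = 0 ∨ dist z z' = 2 := by
    intro z z'
    rcases hallZ z with h | h <;> rcases hallZ z' with h' | h' <;> rw [h, h']
    · left; exact dist_self _
    · right; exact hdz
    · right; rw [dist_comm]; exact hdz
    · left; exact dist_self _
  haveI hfinX : Finite X := Set.finite_univ_iff.mp
    (((Set.finite_singleton x1).insert x0).subset fun x _ => by
      simpa [Set.mem_insert_iff] using hallX x)
  haveI hfinZ : Finite Z := Set.finite_univ_iff.mp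
    (((Set.finite_singleton z1).insert z0).subset fun z _ => by
      simpa [Set.mem_insert_iff] using hallZ z)
  set D : Set ((X × Z) × (X × Z)) := Set.diagonal (X × Z) with hDdef
  have hD : MeasurableSet D := (Set.toFinite D).measurableSet
  set g : (X × Z) × (X × Z) → ℝ :=
    fun w => |dist w.1.1 w.2.1 - dist w.1.2 w.2.2| ^ p with hgdef
  have hg0 : ∀ w, 0 ≤ g w := fun w => Real.rpow_nonneg (abs_nonneg _) p
  have hgm : Measurable g := measurable_of_countable g
  have hg2 : ∀ w, g w ≤ 2 ^ p := by
    intro w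
    apply Real.rpow_le_rpow (abs_nonneg _) _ (le_of_lt hppos)
    rcases hdX w.1.1 w.2.1 with h | h <;> rcases hdZ w.1.2 w.2.2 with h' | h' <;>
      rw [h, h'] <;> norm_num
  have hg1 : ∀ w, w ∉ D → 1 ≤ g w := by
    intro w hw
    have hne : w.1 ≠ w.2 := fun h => hw h
    have habs : 1 ≤ |dist w.1.1 w.2.1 - dist w.1.2 w.2.2| := by
      rcases hdX w.1.1 w.2.1 with h | h <;> rcases hdZ w.1.2 w.2.2 with h' | h'
      · exfalso
        exact hne (Prod.ext (dist_eq_zero.mp h) (dist_eq_zero.mp h'))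
      · rw [h, h']; norm_num
      · rw [h, h']; norm_num
      · rw [h, h']; norm_num
    exact Real.one_le_rpow habs (le_of_lt hppos)
  -- the constant lower bound
  set c : ℝ := (1/2) * (1/2 : ℝ) ^ (1/p) with hcdef
  have hcpos : 0 < c := by
    apply mul_pos (by norm_num)
    exact Real.rpow_pos_of_pos (by norm_num) _
  -- every coupling has objective value at least `c`
  have hbound : ∀ v ∈ (fun μ : Measure (X × Z) =>
      (1 / 2) * (∫ w : (X × Z) × (X × Z),
        GammaStar EX EZ p w.1.1 w.1.2 w.2.1 w.2.2 ∂(μ.prod μ)) ^ (1 / p))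
      '' Couplings EX.tot.μ EZ.tot.μ, c ≤ v := by
    rintro v ⟨ν, ⟨hν1, hν2, hν3⟩, rfl⟩
    haveI := hν1
    -- each atom of the coupling has mass at most 1/2
    have hatom : ∀ w : X × Z, ν {w} ≤ 1/2 := by
      intro w
      have h1 : ν {w} ≤ ν (Prod.fst ⁻¹' {w.1}) :=
        measure_mono fun q hq => by
          simp only [Set.mem_singleton_iff] at hq
          simp [hq]
      have h2 : ν (Prod.fst ⁻¹' {w.1}) = EX.tot.μ {w.1} := by
        rw [← Measure.map_apply measurable_fst (measurableSet_singleton _), hν2]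
      have h3 : EX.tot.μ {w.1} ≤ 1/2 := by
        rw [totMu_two]
        simp only [Measure.smul_apply, Measure.add_apply, smul_eq_mul]
        have h4 : (Measure.dirac x0) {w.1} + (Measure.dirac x1) {w.1} ≤ 1 := by
          classical
          rw [Measure.dirac_apply, Measure.dirac_apply,
            Set.indicator_apply, Set.indicator_apply]
          split_ifs with h1 h2 h2  <;>
            simp_all [Set.mem_singleton_iff]
        calc (1/2 : ℝ≥0∞) * ((Measure.dirac x0) {w.1} + (Measure.dirac x1) {w.1})
            ≤ (1/2) * 1 := by
              exact mul_le_mul_right h4 _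
          _ = 1/2 := mul_one _
      calc ν {w} ≤ ν (Prod.fst ⁻¹' {w.1}) := h1
        _ = EX.tot.μ {w.1} := h2
        _ ≤ 1/2 := h3
    -- the diagonal has mass at most 1/2 for the self-product
    have hdiag : (ν.prod ν) D ≤ 1/2 := by
      rw [Measure.prod_apply hD]
      have hpre : ∀ w : X × Z, Prod.mk w ⁻¹' D = {w} := by
        intro w
        ext q
        simp [hDdef, Set.diagonal, eq_comm]
      calc ∫⁻ w, ν (Prod.mk w ⁻¹' D) ∂ν = ∫⁻ w, ν {w} ∂ν := by
            simp only [hpre]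
        _ ≤ ∫⁻ _, 1/2 ∂ν := lintegral_mono fun w => hatom w
        _ = 1/2 := by rw [lintegral_const, measure_univ, mul_one]
    haveI : IsProbabilityMeasure (ν.prod ν) := by infer_instance
    have hdiagc : (1/2 : ℝ≥0∞) ≤ (ν.prod ν) Dᶜ := by
      rw [prob_compl_eq_one_sub hD]
      calc (1/2 : ℝ≥0∞) = 1 - 1/2 := by norm_num
        _ ≤ 1 - (ν.prod ν) D := tsub_le_tsub_left hdiag 1
    have hdiagcr : (1/2 : ℝ) ≤ ((ν.prod ν) Dᶜ).toReal := by
      have := ENNReal.toReal_mono (measure_ne_top _ _) hdiagc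
      simpa using this
    -- integrability
    have hint : Integrable g (ν.prod ν) :=
      (integrable_const ((2:ℝ) ^ p)).mono' hgm.aestronglyMeasurable
        (Filter.Eventually.of_forall fun w => by
          rw [Real.norm_eq_abs, abs_of_nonneg (hg0 w)]; exact hg2 w)
    have hindint : Integrable (Dᶜ.indicator fun _ => (1:ℝ)) (ν.prod ν) :=
      (integrable_const (1:ℝ)).indicator hD.compl
    have hle : (Dᶜ.indicator fun _ => (1:ℝ)) ≤ g := by
      intro w
      by_cases hw : w ∈ Dᶜ
      · rw [Set.indicator_of_mem hw]
        exact hg1 w hw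
      · rw [Set.indicator_of_notMem hw]
        exact hg0 w
    have hlow : (1/2 : ℝ) ≤ ∫ w, g w ∂(ν.prod ν) := by
      have h5 : ∫ w, (Dᶜ.indicator fun _ => (1:ℝ)) w ∂(ν.prod ν)
          = ((ν.prod ν) Dᶜ).toReal := by
        rw [integral_indicator_const _ hD.compl, smul_eq_mul, mul_one, measureReal_def]
      calc (1/2 : ℝ) ≤ ((ν.prod ν) Dᶜ).toReal := hdiagcr
        _ = ∫ w, (Dᶜ.indicator fun _ => (1:ℝ)) w ∂(ν.prod ν) := h5.symm
        _ ≤ ∫ w, g w ∂(ν.prod ν) := integral_mono hindint hint hle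
    show c ≤ (1/2) * (∫ w : (X × Z) × (X × Z),
        GammaStar EX EZ p w.1.1 w.1.2 w.2.1 w.2.2 ∂(ν.prod ν)) ^ (1 / p)
    have hrw : ∫ w : (X × Z) × (X × Z),
        GammaStar EX EZ p w.1.1 w.1.2 w.2.1 w.2.2 ∂(ν.prod ν) = ∫ w, g w ∂(ν.prod ν) := by
      apply integral_congr_ae
      exact Filter.Eventually.of_forall fun w => hΓ _ _ _ _
    rw [hcdef, hrw]
    apply mul_le_mul_of_nonneg_left _ (by norm_num : (0:ℝ) ≤ 1/2)
    exact Real.rpow_le_rpow (by norm_num) (by linarith [hlow]) (by positivity)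
  -- nonemptiness of the coupling set
  have hne : ((fun μ : Measure (X × Z) =>
      (1 / 2) * (∫ w : (X × Z) × (X × Z),
        GammaStar EX EZ p w.1.1 w.1.2 w.2.1 w.2.2 ∂(μ.prod μ)) ^ (1 / p))
      '' Couplings EX.tot.μ EZ.tot.μ).Nonempty := by
    refine ⟨_, ⟨EX.tot.μ.prod EZ.tot.μ, ⟨inferInstance, ?_, ?_⟩, rfl⟩⟩
    · simp
    · simp
  exact lt_of_lt_of_le hcpos (le_csInf hne hbound)
/-- The joint Gromov-Wasserstein objective does not satisfy
the triangle inequality: with `𝐗 = {0,1}` (one cluster, uniform), `𝐙 = {0,2}`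
(one cluster, uniform) and `𝐘` two one-point clusters of weight `1/2` each, one
has `JGW_p(𝐗,𝐘) = 0` and `JGW_p(𝐙,𝐘) = 0`, but `JGW_p(𝐗,𝐙) > 0`. -/
theorem jgw_triangle_inequality_fails (p : ℝ) (hp : 1 ≤ p) :
    (∀ (EX : MMEmbedding distX) (EY : MMEmbedding distY), JGWwith EX EY p = 0) ∧
    (∀ (EZ : MMEmbedding distZ) (EY : MMEmbedding distY), JGWwith EZ EY p = 0) ∧
    (∀ (EX : MMEmbedding distX) (EZ : MMEmbedding distZ), 0 < JGWwith EX EZ p) := by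
  exact ⟨fun EX EY => jgw_two_Y_eq_zero 0 1 p hp EX EY,
    fun EZ EY => jgw_two_Y_eq_zero 0 2 p hp EZ EY,
    fun EX EZ => jgw_XZ_pos p hp EX EZ⟩
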